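/- Let a_1,…,a_n be positive integers with ∑ a_i = 2b. If {a_1,…,a_n} admits a partition into two sets A_1, A_2 with ∑_{a_i∈A_1} a_i = ∑_{a_j∈A_2} a_j = b, then in the graph G' (nodes {w_0,…,w_n} ∪ {v_1,…,v_n}; for each i, edge (w_{i-1},w_i) with delay a_i, and edges (w_{i-1},v_i),(v_i,w_i) with delay 0; all capacities 1) there exist two edge-disjoint w_0–w_n paths p_1, p_2, each of delay exactly b, so that assigning unit rate to each of them yields a feasible flow of rate R = 2 with maximum delay D(f) = b. -/
import Mathlib


/-- A directed network: each edge has a source node, a destination node,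
a non-negative integer capacity and a non-negative integer delay. -/
structure Network (V : Type) (E : Type) where
  src : E → V
  dst : E → V
  cap : E → ℕ
  delay : E → ℕ

namespace Network

variable {V E : Type}

/-- `N.IsPath s t p` : the list of edges `p` forms a directed path from `s` to `t`. -/
def IsPath (N : Network V E) : V → V → List E → Prop
  | s, t, [] => s = t
  | s, t, e :: es => N.src e = s ∧ N.IsPath (N.dst e) t es

/-- The delay of a path: the sum of the delays of its edges. -/
def pathDelay (N : Network V E) (p : List E) : ℕ := (p.map N.delay).sum

end Network

/-- A (path-based) flow from `s` to `t`: a finitely-supported assignment of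
non-negative rates to `s`–`t` paths. -/
structure PathFlow {V E : Type} (N : Network V E) (s t : V) where
  f : List E →₀ ℝ
  nonneg : ∀ p, 0 ≤ f p
  isPath : ∀ p ∈ f.support, N.IsPath s t p

namespace PathFlow

variable {V E : Type} [DecidableEq E] {N : Network V E} {s t : V}

/-- Total rate of the flow. -/
noncomputable def totalRate (F : PathFlow N s t) : ℝ := ∑ p ∈ F.f.support, F.f p

/-- Rate carried by edge `e`: the sum of the rates of all paths containing `e`. -/
noncomputable def edgeRate (F : PathFlow N s t) (e : E) : ℝ :=
  ∑ p ∈ F.f.support, if e ∈ p then F.f p else 0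

/-- Feasibility with rate `R`: total rate is `R` and every edge capacity is respected. -/
def Feasible (F : PathFlow N s t) (R : ℝ) : Prop :=
  F.totalRate = R ∧ ∀ e, F.edgeRate e ≤ (N.cap e : ℝ)

/-- The maximum delay over flow-carrying paths. -/
def maxDelay (F : PathFlow N s t) : ℕ := F.f.support.sup N.pathDelay

/-- An integer flow assigns a non-negative integer rate to every path. -/
def IsInteger (F : PathFlow N s t) : Prop := ∀ p, ∃ m : ℕ, F.f p = (m : ℝ)

end PathFlow
/-- Nodes of the partition-reduction graph `G'`: `Sum.inl i` is `w_i` (`i = 0,…,n`),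
`Sum.inr i` is `v_{i+1}` (`i = 0,…,n-1`). -/
abbrev GV (n : ℕ) := Fin (n + 1) ⊕ Fin n

/-- Edges of `G'`: `Sum.inl i` is the direct edge `(w_i, w_{i+1})` of delay `a i`;
`Sum.inr (Sum.inl i)` is `(w_i, v_{i+1})` and `Sum.inr (Sum.inr i)` is `(v_{i+1}, w_{i+1})`,
both of delay `0`. All edges have capacity `1`. -/
abbrev GE (n : ℕ) := Fin n ⊕ (Fin n ⊕ Fin n)

/-- The graph `G'` reduced from the partition problem. -/
def Gpart (n : ℕ) (a : Fin n → ℕ) : Network (GV n) (GE n) where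
  src
    | Sum.inl i => Sum.inl i.castSucc
    | Sum.inr (Sum.inl i) => Sum.inl i.castSucc
    | Sum.inr (Sum.inr i) => Sum.inr i
  dst
    | Sum.inl i => Sum.inl i.succ
    | Sum.inr (Sum.inl i) => Sum.inr i
    | Sum.inr (Sum.inr i) => Sum.inl i.succ
  cap := fun _ => 1
  delay
    | Sum.inl i => a i
    | Sum.inr _ => 0

section Aux

variable {V E : Type}

lemma Network.isPath_append (N : Network V E) {s m t : V} :
    ∀ {p : List E} {q : List E}, N.IsPath s m p → N.IsPath m t q → N.IsPath s t (p ++ q)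
  | [], q, hp, hq => by
      have : s = m := hp
      subst this; simpa using hq
  | e :: es, q, hp, hq => ⟨hp.1, N.isPath_append hp.2 hq⟩

lemma Network.pathDelay_append (N : Network V E) (p q : List E) :
    N.pathDelay (p ++ q) = N.pathDelay p + N.pathDelay q := by
  simp [Network.pathDelay]

/-- One "segment" of the path: the direct edge if `i ∈ S`, the bypass otherwise. -/
def seg {n : ℕ} (S : Finset (Fin n)) (i : Fin n) : List (GE n) :=
  if i ∈ S then [Sum.inl i] else [Sum.inr (Sum.inl i), Sum.inr (Sum.inr i)]

/-- The path built from the first `m` segments. -/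
def build {n : ℕ} (S : Finset (Fin n)) : (m : ℕ) → m ≤ n → List (GE n)
  | 0, _ => []
  | m + 1, h => build S m (Nat.le_of_succ_le h) ++ seg S ⟨m, h⟩

lemma seg_isPath {n : ℕ} (a : Fin n → ℕ) (S : Finset (Fin n)) (i : Fin n) :
    (Gpart n a).IsPath (Sum.inl i.castSucc) (Sum.inl i.succ) (seg S i) := by
  unfold seg
  split
  · exact ⟨rfl, rfl⟩
  · exact ⟨rfl, rfl, rfl⟩

lemma build_isPath {n : ℕ} (a : Fin n → ℕ) (S : Finset (Fin n)) :
    ∀ (m : ℕ) (h : m ≤ n),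
      (Gpart n a).IsPath (Sum.inl 0) (Sum.inl ⟨m, Nat.lt_succ_of_le h⟩) (build S m h)
  | 0, h => by
      show Sum.inl (0 : Fin (n+1)) = Sum.inl (⟨0, _⟩ : Fin (n+1))
      rfl
  | m + 1, h => by
      refine (Gpart n a).isPath_append (build_isPath a S m (Nat.le_of_succ_le h)) ?_
      exact seg_isPath a S ⟨m, h⟩

lemma seg_delay {n : ℕ} (a : Fin n → ℕ) (S : Finset (Fin n)) (i : Fin n) :
    (Gpart n a).pathDelay (seg S i) = if i ∈ S then a i else 0 := by
  unfold seg
  split <;> simp [Network.pathDelay, Gpart]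

lemma build_delay {n : ℕ} (a : Fin n → ℕ) (S : Finset (Fin n)) :
    ∀ (m : ℕ) (h : m ≤ n),
      (Gpart n a).pathDelay (build S m h) = ∑ i ∈ S.filter (fun i => i.val < m), a i
  | 0, h => by
      have : S.filter (fun i => i.val < 0) = ∅ := by
        ext i; simp
      simp [build, Network.pathDelay, this]
  | m + 1, h => by
      rw [build, Network.pathDelay_append, build_delay a S m (Nat.le_of_succ_le h),
        seg_delay]
      by_cases hm : (⟨m, h⟩ : Fin n) ∈ S
      · have hins : S.filter (fun i => i.val < m + 1)
            = insert (⟨m, h⟩ : Fin n) (S.filter (fun i => i.val < m)) := by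
          ext i
          simp only [Finset.mem_filter, Finset.mem_insert, Fin.ext_iff]
          constructor
          · rintro ⟨hiS, hlt⟩
            rcases Nat.lt_succ_iff_lt_or_eq.mp hlt with h' | h'
            · exact Or.inr ⟨hiS, h'⟩
            · exact Or.inl h'
          · rintro (h' | ⟨hiS, hlt⟩)
            · have : i = ⟨m, h⟩ := Fin.ext (show i.val = (⟨m, h⟩ : Fin n).val from h')
              subst this; exact ⟨hm, Nat.lt_succ_self m⟩
            · exact ⟨hiS, Nat.lt_succ_of_lt hlt⟩
        rw [hins, Finset.sum_insert (by simp), if_pos hm]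
        ring
      · have heq : S.filter (fun i => i.val < m + 1) = S.filter (fun i => i.val < m) := by
          ext i
          simp only [Finset.mem_filter]
          constructor
          · rintro ⟨hiS, hlt⟩
            refine ⟨hiS, ?_⟩
            rcases Nat.lt_succ_iff_lt_or_eq.mp hlt with h' | h'
            · exact h'
            · have : i = ⟨m, h⟩ := Fin.ext (show i.val = (⟨m, h⟩ : Fin n).val from h')
              exact absurd (this ▸ hiS) hm
          · rintro ⟨hiS, hlt⟩
            exact ⟨hiS, Nat.lt_succ_of_lt hlt⟩
        rw [heq, if_neg hm]
        omega

lemma mem_build {n : ℕ} (S : Finset (Fin n)) :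
    ∀ (m : ℕ) (h : m ≤ n) (e : GE n), e ∈ build S m h →
      (match e with
        | Sum.inl i => i ∈ S
        | Sum.inr (Sum.inl i) => i ∉ S
        | Sum.inr (Sum.inr i) => i ∉ S)
  | 0, h, e, he => by simp [build] at he
  | m + 1, h, e, he => by
      rw [build, List.mem_append] at he
      rcases he with he | he
      · exact mem_build S m (Nat.le_of_succ_le h) e he
      · unfold seg at he
        split at he
        · rename_i hm
          simp only [List.mem_singleton] at he
          subst he; exact hm
        · rename_i hm
          simp only [List.mem_cons, List.mem_singleton] at he
          rcases he with he | he | he <;> first | (subst he; exact hm) | exact absurd he (by simp)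

lemma build_ne_nil {n : ℕ} (S : Finset (Fin n)) (m : ℕ) (h : m + 1 ≤ n) :
    build S (m + 1) h ≠ [] := by
  rw [build]
  intro hcon
  rcases List.append_eq_nil_iff.mp hcon with ⟨_, hseg⟩
  unfold seg at hseg
  split at hseg <;> simp at hseg

lemma PathFlow.edgeRate_pair {V E : Type} [DecidableEq E] {N : Network V E} {s t : V}
    (F : PathFlow N s t) {p₁ p₂ : List E} (h : F.f.support = {p₁, p₂}) (hne : p₁ ≠ p₂)
    (e : E) :
    F.edgeRate e = (if e ∈ p₁ then F.f p₁ else 0) + (if e ∈ p₂ then F.f p₂ else 0) := by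
  rw [PathFlow.edgeRate, h, Finset.sum_pair hne]

end Aux

/-- **"Only if" part of Theorem 1.** For `n ≥ 1` and positive integers `a i` summing to `2 b`:
if the `a i` can be partitioned into two sets each summing to `b`, then in `G'` there are two
edge-disjoint `w₀`–`wₙ` paths, each of delay exactly `b`, and assigning a unit rate to each of
them yields a feasible flow of rate `R = 2` whose maximum delay is `b`. -/
theorem gpart_partition_to_flow (n b : ℕ) (hn : 1 ≤ n) (a : Fin n → ℕ)
    (ha : ∀ i, 0 < a i) (hsum : ∑ i, a i = 2 * b)
    (S : Finset (Fin n)) (hS₁ : ∑ i ∈ S, a i = b) (hS₂ : ∑ i ∈ Sᶜ, a i = b) :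
    ∃ p₁ p₂ : List (GE n),
      (Gpart n a).IsPath (Sum.inl 0) (Sum.inl (Fin.last n)) p₁ ∧
      (Gpart n a).IsPath (Sum.inl 0) (Sum.inl (Fin.last n)) p₂ ∧
      (∀ e : GE n, ¬(e ∈ p₁ ∧ e ∈ p₂)) ∧
      (Gpart n a).pathDelay p₁ = b ∧ (Gpart n a).pathDelay p₂ = b ∧
      ∃ F : PathFlow (Gpart n a) (Sum.inl 0) (Sum.inl (Fin.last n)),
        F.f p₁ = 1 ∧ F.f p₂ = 1 ∧ (∀ p, p ≠ p₁ → p ≠ p₂ → F.f p = 0) ∧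
        F.Feasible 2 ∧ F.maxDelay = b := by
  classical
  set p₁ : List (GE n) := build S n le_rfl with hp₁def
  set p₂ : List (GE n) := build Sᶜ n le_rfl with hp₂def
  have hpath₁ : (Gpart n a).IsPath (Sum.inl 0) (Sum.inl (Fin.last n)) p₁ :=
    build_isPath a S n le_rfl
  have hpath₂ : (Gpart n a).IsPath (Sum.inl 0) (Sum.inl (Fin.last n)) p₂ :=
    build_isPath a Sᶜ n le_rfl
  have hdisj : ∀ e : GE n, ¬(e ∈ p₁ ∧ e ∈ p₂) := by
    rintro e ⟨he₁, he₂⟩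
    have h₁ := mem_build S n le_rfl e he₁
    have h₂ := mem_build Sᶜ n le_rfl e he₂
    rcases e with i | i | i <;> simp_all
  have hfilter : ∀ T : Finset (Fin n), T.filter (fun i => i.val < n) = T := by
    intro T; ext i; simp [i.isLt]
  have hd₁ : (Gpart n a).pathDelay p₁ = b := by
    rw [hp₁def, build_delay, hfilter, hS₁]
  have hd₂ : (Gpart n a).pathDelay p₂ = b := by
    rw [hp₂def, build_delay, hfilter, hS₂]
  have hne : p₁ ≠ p₂ := by
    intro hcon
    obtain ⟨m, hm⟩ := Nat.exists_eq_add_of_le hn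
    have hnnil : p₁ ≠ [] := by
      rw [hp₁def]
      cases n with
      | zero => omega
      | succ k => exact build_ne_nil S k (le_refl _)
    obtain ⟨e, he⟩ := List.exists_mem_of_ne_nil _ hnnil
    exact hdisj e ⟨he, hcon ▸ he⟩
  refine ⟨p₁, p₂, hpath₁, hpath₂, hdisj, hd₁, hd₂, ?_⟩
  set f : List (GE n) →₀ ℝ := Finsupp.single p₁ 1 + Finsupp.single p₂ 1 with hfdef
  have happ : ∀ p, f p = (if p = p₁ then (1:ℝ) else 0) + (if p = p₂ then (1:ℝ) else 0) := by
    intro p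
    simp [hfdef, Finsupp.single_apply, eq_comm]
  have hf₁ : f p₁ = 1 := by rw [happ, if_pos rfl, if_neg hne]; ring
  have hf₂ : f p₂ = 1 := by rw [happ, if_neg (Ne.symm hne), if_pos rfl]; ring
  have hf0 : ∀ p, p ≠ p₁ → p ≠ p₂ → f p = 0 := by
    intro p h1 h2; rw [happ, if_neg h1, if_neg h2]; ring
  have hsupp : f.support = {p₁, p₂} := by
    ext q
    simp only [Finsupp.mem_support_iff, Finset.mem_insert, Finset.mem_singleton]
    constructor
    · intro hq
      by_contra hcon
      push_neg at hcon
      exact hq (hf0 q hcon.1 hcon.2)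
    · rintro (rfl | rfl)
      · rw [hf₁]; norm_num
      · rw [hf₂]; norm_num
  have hnonneg : ∀ p, 0 ≤ f p := by
    intro p; rw [happ]; positivity
  refine ⟨⟨f, hnonneg, ?_⟩, hf₁, hf₂, hf0, ⟨?_, ?_⟩, ?_⟩
  · intro p hp
    rw [hsupp] at hp
    rcases Finset.mem_insert.mp hp with rfl | hp
    · exact hpath₁
    · rw [Finset.mem_singleton.mp hp]; exact hpath₂
  · show ∑ p ∈ f.support, f p = 2
    rw [hsupp, Finset.sum_pair hne, hf₁, hf₂]; norm_num
  · intro e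
    rw [PathFlow.edgeRate_pair _ hsupp hne e, hf₁, hf₂]
    have : (Gpart n a).cap e = 1 := rfl
    rw [this]
    rcases Classical.em (e ∈ p₁) with h1 | h1
    · have h2 : e ∉ p₂ := fun h => hdisj e ⟨h1, h⟩
      simp [h1, h2]
    · rcases Classical.em (e ∈ p₂) with h2 | h2 <;> simp [h1, h2]
  · show f.support.sup (Gpart n a).pathDelay = b
    rw [hsupp]
    simp [hd₁, hd₂]
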